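/- Let U ⊆ ℝ² be an open convex set and let F = (F₁, F₂) : U → ℝ² be continuously differentiable on U with ∂₁F₂(x) = ∂₂F₁(x) for every x ∈ U. Then there exists a differentiable function φ : U → ℝ such that ∂₁φ = F₁ and ∂₂φ = F₂ on U; that is, every curl-free C¹ vector field on an open convex planar domain is a gradient field. -/

import Mathlib

open ContinuousLinearMap Set Metric MeasureTheory

set_option synthInstance.maxHeartbeats 1000000
set_option maxHeartbeats 2000000

/-- The 1-form associated to the vector field. -/
noncomputable def omg (F₁ F₂ : ℝ × ℝ → ℝ) (x : ℝ × ℝ) : (ℝ × ℝ) →L[ℝ] ℝ :=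
  F₁ x • ContinuousLinearMap.fst ℝ ℝ ℝ + F₂ x • ContinuousLinearMap.snd ℝ ℝ ℝ

/-- Its derivative (valid at points of `U`). -/
noncomputable def omg' (F₁ F₂ : ℝ × ℝ → ℝ) (x : ℝ × ℝ) : (ℝ × ℝ) →L[ℝ] (ℝ × ℝ) →L[ℝ] ℝ :=
  (fderiv ℝ F₁ x).smulRight (ContinuousLinearMap.fst ℝ ℝ ℝ) +
    (fderiv ℝ F₂ x).smulRight (ContinuousLinearMap.snd ℝ ℝ ℝ)

lemma omg_apply (F₁ F₂ : ℝ × ℝ → ℝ) (x v : ℝ × ℝ) :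
    omg F₁ F₂ x v = F₁ x * v.1 + F₂ x * v.2 := by
  simp [omg]

lemma omg'_apply (F₁ F₂ : ℝ × ℝ → ℝ) (x u v : ℝ × ℝ) :
    omg' F₁ F₂ x u v = fderiv ℝ F₁ x u * v.1 + fderiv ℝ F₂ x u * v.2 := by
  simp [omg', smul_eq_mul]

lemma clm_expand (L : (ℝ × ℝ) →L[ℝ] ℝ) (u : ℝ × ℝ) :
    L u = u.1 * L (1, 0) + u.2 * L (0, 1) := by
  have h : u = u.1 • ((1 : ℝ), (0 : ℝ)) + u.2 • ((0 : ℝ), (1 : ℝ)) := by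
    simp [Prod.ext_iff]
  nth_rewrite 1 [h]
  rw [map_add, L.map_smul, L.map_smul, smul_eq_mul, smul_eq_mul]

section

variable {U : Set (ℝ × ℝ)} {F₁ F₂ : ℝ × ℝ → ℝ}

lemma hasFDerivAt_omg (hU : IsOpen U) (hF₁ : ContDiffOn ℝ 1 F₁ U) (hF₂ : ContDiffOn ℝ 1 F₂ U)
    {x : ℝ × ℝ} (hx : x ∈ U) : HasFDerivAt (omg F₁ F₂) (omg' F₁ F₂ x) x := by
  have h1 : HasFDerivAt F₁ (fderiv ℝ F₁ x) x :=
    (((hF₁.differentiableOn one_ne_zero) x hx).differentiableAt (hU.mem_nhds hx)).hasFDerivAt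
  have h2 : HasFDerivAt F₂ (fderiv ℝ F₂ x) x :=
    (((hF₂.differentiableOn one_ne_zero) x hx).differentiableAt (hU.mem_nhds hx)).hasFDerivAt
  have := (h1.smul (hasFDerivAt_const (ContinuousLinearMap.fst ℝ ℝ ℝ) x)).add
    (h2.smul (hasFDerivAt_const (ContinuousLinearMap.snd ℝ ℝ ℝ) x))
  simp only [smul_zero, zero_add] at this
  exact this

lemma continuousOn_omg (hF₁ : ContDiffOn ℝ 1 F₁ U) (hF₂ : ContDiffOn ℝ 1 F₂ U) :
    ContinuousOn (omg F₁ F₂) U :=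
  (hF₁.continuousOn.smul continuousOn_const).add (hF₂.continuousOn.smul continuousOn_const)

lemma continuousOn_fderiv (hU : IsOpen U) (hF₁ : ContDiffOn ℝ 1 F₁ U) :
    ContinuousOn (fderiv ℝ F₁) U :=
  (hF₁.continuousOn_fderivWithin hU.uniqueDiffOn le_rfl).congr
    fun x hx => (fderivWithin_of_isOpen hU hx).symm

lemma continuousOn_omg' (hU : IsOpen U) (hF₁ : ContDiffOn ℝ 1 F₁ U)
    (hF₂ : ContDiffOn ℝ 1 F₂ U) : ContinuousOn (omg' F₁ F₂) U := by
  set T : (((ℝ × ℝ) →L[ℝ] ℝ) × ((ℝ × ℝ) →L[ℝ] ℝ)) →L[ℝ] ((ℝ × ℝ) →L[ℝ] (ℝ × ℝ) →L[ℝ] ℝ) :=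
    (((smulRightL ℝ (ℝ × ℝ) ((ℝ × ℝ) →L[ℝ] ℝ)).flip (ContinuousLinearMap.fst ℝ ℝ ℝ)).comp
      (ContinuousLinearMap.fst ℝ _ _)) +
    (((smulRightL ℝ (ℝ × ℝ) ((ℝ × ℝ) →L[ℝ] ℝ)).flip (ContinuousLinearMap.snd ℝ ℝ ℝ)).comp
      (ContinuousLinearMap.snd ℝ _ _)) with hT
  have h : ContinuousOn (fun x => T (fderiv ℝ F₁ x, fderiv ℝ F₂ x)) U :=
    T.continuous.comp_continuousOn
      ((continuousOn_fderiv hU hF₁).prodMk (continuousOn_fderiv hU hF₂))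
  refine h.congr fun x hx => ?_
  simp [hT, omg', smulRightL]

lemma omg'_symm (hU : IsOpen U)
    (hcurl : ∀ x ∈ U, fderivWithin ℝ F₂ U x (1, 0) = fderivWithin ℝ F₁ U x (0, 1))
    {x : ℝ × ℝ} (hx : x ∈ U) (u v : ℝ × ℝ) :
    omg' F₁ F₂ x u v = omg' F₁ F₂ x v u := by
  have hc : fderiv ℝ F₂ x (1, 0) = fderiv ℝ F₁ x (0, 1) := by
    rw [← fderivWithin_of_isOpen hU hx, ← fderivWithin_of_isOpen hU hx]
    exact hcurl x hx
  rw [omg'_apply, omg'_apply, clm_expand (fderiv ℝ F₁ x) u, clm_expand (fderiv ℝ F₂ x) u,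
    clm_expand (fderiv ℝ F₁ x) v, clm_expand (fderiv ℝ F₂ x) v, hc]
  ring

end

theorem curl_free_is_gradient (U : Set (ℝ × ℝ)) (hU : IsOpen U) (hconv : Convex ℝ U)
    (F₁ F₂ : ℝ × ℝ → ℝ)
    (hF₁ : ContDiffOn ℝ 1 F₁ U) (hF₂ : ContDiffOn ℝ 1 F₂ U)
    (hcurl : ∀ x ∈ U, fderivWithin ℝ F₂ U x (1, 0) = fderivWithin ℝ F₁ U x (0, 1)) :
    ∃ φ : ℝ × ℝ → ℝ, ∀ x ∈ U,
      HasFDerivAt φ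
        (F₁ x • ContinuousLinearMap.fst ℝ ℝ ℝ + F₂ x • ContinuousLinearMap.snd ℝ ℝ ℝ) x := by
  rcases U.eq_empty_or_nonempty with rfl | ⟨a, ha⟩
  · exact ⟨0, by simp⟩
  set ω : (ℝ × ℝ) → (ℝ × ℝ) →L[ℝ] ℝ := omg F₁ F₂ with hω
  set ω' : (ℝ × ℝ) → (ℝ × ℝ) →L[ℝ] (ℝ × ℝ) →L[ℝ] ℝ := omg' F₁ F₂ with hω'
  refine ⟨fun x => ∫ t in (0:ℝ)..1, ω (a + t • (x - a)) (x - a), fun x₀ hx₀ => ?_⟩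
  obtain ⟨ε, εpos, hball⟩ : ∃ ε > 0, closedBall x₀ ε ⊆ U := by
    rcases Metric.isOpen_iff.1 hU x₀ hx₀ with ⟨δ, δpos, hδ⟩
    exact ⟨δ / 2, by positivity, (closedBall_subset_ball (by linarith)).trans hδ⟩
  have hmem : ∀ t ∈ Icc (0:ℝ) 1, ∀ x ∈ closedBall x₀ ε, a + t • (x - a) ∈ U := by
    intro t ht x hx
    have he : a + t • (x - a) = (1 - t) • a + t • x := by
      rw [smul_sub, sub_smul, one_smul]; abel
    rw [he]
    exact hconv ha (hball hx) (by linarith [ht.2]) ht.1 (by ring)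
  -- the compact set where all the segments live
  set K : Set (ℝ × ℝ) :=
    (fun p : ℝ × (ℝ × ℝ) => a + p.1 • (p.2 - a)) '' (Icc (0:ℝ) 1 ×ˢ closedBall x₀ ε) with hK
  have hKc : IsCompact K :=
    ((isCompact_Icc).prod (isCompact_closedBall _ _)).image (by fun_prop)
  have hKU : K ⊆ U := by
    rintro _ ⟨⟨t, x⟩, ⟨ht, hx⟩, rfl⟩
    exact hmem t ht x hx
  have hKmem : ∀ t ∈ Icc (0:ℝ) 1, ∀ x ∈ closedBall x₀ ε, a + t • (x - a) ∈ K :=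
    fun t ht x hx => ⟨(t, x), ⟨ht, hx⟩, rfl⟩
  obtain ⟨C₁, hC₁⟩ := IsCompact.exists_bound_of_continuousOn (E := (ℝ × ℝ) →L[ℝ] (ℝ × ℝ) →L[ℝ] ℝ) hKc
    ((continuousOn_omg' hU hF₁ hF₂).mono hKU)
  obtain ⟨C₂, hC₂⟩ := hKc.exists_bound_of_continuousOn ((continuousOn_omg hF₁ hF₂).mono hKU)
  set M₁ : ℝ := max C₁ 0 with hM₁
  set M₂ : ℝ := max C₂ 0 with hM₂
  set R : ℝ := ‖x₀ - a‖ + ε with hR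
  have hRnn : 0 ≤ R := by positivity
  -- the candidate derivative of the integrand
  set D : (ℝ × ℝ) → ℝ → (ℝ × ℝ) →L[ℝ] ℝ :=
    fun x t => ω (a + t • (x - a)) + t • ((ω' (a + t • (x - a))).flip (x - a)) with hD
  have hIsub : Set.uIoc (0:ℝ) 1 ⊆ Icc (0:ℝ) 1 := by
    rw [Set.uIoc_of_le zero_le_one]
    exact Set.Ioc_subset_Icc_self
  have hx₀ball : x₀ ∈ closedBall x₀ ε := mem_closedBall_self εpos.le
  -- continuity in t of the integrand and of D, for fixed x in the closed ball
  have hcontc : ∀ x : ℝ × ℝ, Continuous fun t : ℝ => a + t • (x - a) := by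
    intro x; fun_prop
  have hGcont : ∀ x ∈ closedBall x₀ ε, ContinuousOn
      (fun t : ℝ => ω (a + t • (x - a)) (x - a)) (Icc (0:ℝ) 1) := by
    intro x hx
    refine ContinuousOn.clm_apply ?_ continuousOn_const
    exact (continuousOn_omg hF₁ hF₂).comp (hcontc x).continuousOn
      (fun t ht => hmem t ht x hx)
  have hDcont : ∀ x ∈ closedBall x₀ ε, ContinuousOn (fun t => D x t) (Icc (0:ℝ) 1) := by
    intro x hx
    have h1 : ContinuousOn (fun t : ℝ => ω (a + t • (x - a))) (Icc (0:ℝ) 1) :=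
      (continuousOn_omg hF₁ hF₂).comp (hcontc x).continuousOn (fun t ht => hmem t ht x hx)
    have h2 : ContinuousOn (fun t : ℝ => ω' (a + t • (x - a))) (Icc (0:ℝ) 1) :=
      (continuousOn_omg' hU hF₁ hF₂).comp (hcontc x).continuousOn (fun t ht => hmem t ht x hx)
    have h3 : ContinuousOn (fun t : ℝ => (ω' (a + t • (x - a))).flip (x - a)) (Icc (0:ℝ) 1) := by
      have hflip : Continuous fun L : (ℝ × ℝ) →L[ℝ] (ℝ × ℝ) →L[ℝ] ℝ => L.flip :=
        (flipₗᵢ ℝ (ℝ × ℝ) (ℝ × ℝ) ℝ).continuous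
      exact ContinuousOn.clm_apply (hflip.comp_continuousOn h2) continuousOn_const
    exact h1.add (continuousOn_id.smul h3)
  -- differentiability of the integrand in x
  have hdiff : ∀ t ∈ Set.uIoc (0:ℝ) 1, ∀ x ∈ ball x₀ ε,
      HasFDerivAt (fun y => ω (a + t • (y - a)) (y - a)) (D x t) x := by
    intro t ht x hx
    have hcU : a + t • (x - a) ∈ U := hmem t (hIsub ht) x (ball_subset_closedBall hx)
    have hc : HasFDerivAt (fun y : ℝ × ℝ => a + t • (y - a))
        (t • ContinuousLinearMap.id ℝ (ℝ × ℝ)) x := by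
      simpa using (((hasFDerivAt_id x).sub_const a).const_smul t).const_add a
    have hωd : HasFDerivAt ω (ω' (a + t • (x - a))) (a + t • (x - a)) :=
      hasFDerivAt_omg hU hF₁ hF₂ hcU
    have hcomp := (hωd.comp x hc).clm_apply ((hasFDerivAt_id x).sub_const a)
    refine hcomp.congr_fderiv (ContinuousLinearMap.ext fun v => ?_)
    simp only [hD, Function.comp, ContinuousLinearMap.comp_apply,
      ContinuousLinearMap.add_apply, ContinuousLinearMap.flip_apply,
      ContinuousLinearMap.coe_id', id_eq, ContinuousLinearMap.coe_smul', Pi.smul_apply,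
      ContinuousLinearMap.smul_apply, (ω' (a + t • (x - a))).map_smul, smul_eq_mul, _root_.id]
  -- uniform bound for D
  have hbound : ∀ t ∈ Set.uIoc (0:ℝ) 1, ∀ x ∈ ball x₀ ε, ‖D x t‖ ≤ M₂ + M₁ * R := by
    intro t ht x hx
    have hxK : a + t • (x - a) ∈ K := hKmem t (hIsub ht) x (ball_subset_closedBall hx)
    have h1 : ‖ω (a + t • (x - a))‖ ≤ M₂ := le_trans (hC₂ _ hxK) (le_max_left _ _)
    have h2 : ‖ω' (a + t • (x - a))‖ ≤ M₁ := le_trans (hC₁ _ hxK) (le_max_left _ _)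
    have h3 : ‖x - a‖ ≤ R := by
      calc ‖x - a‖ ≤ ‖x - x₀‖ + ‖x₀ - a‖ := norm_sub_le_norm_sub_add_norm_sub x x₀ a
      _ ≤ ε + ‖x₀ - a‖ := by
          gcongr
          exact le_of_lt (mem_ball_iff_norm.mp hx)
      _ = R := by rw [hR]; ring
    have ht' : |t| ≤ 1 := by
      rw [Set.uIoc_of_le zero_le_one] at ht
      rw [abs_le]; constructor <;> linarith [ht.1, ht.2]
    have h4 : ‖(ω' (a + t • (x - a))).flip (x - a)‖ ≤ M₁ * R := by
      calc ‖(ω' (a + t • (x - a))).flip (x - a)‖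
          ≤ ‖(ω' (a + t • (x - a))).flip‖ * ‖x - a‖ := le_opNorm _ _
        _ = ‖ω' (a + t • (x - a))‖ * ‖x - a‖ := by rw [opNorm_flip]
        _ ≤ M₁ * R := by
            apply mul_le_mul h2 h3 (norm_nonneg _) (le_max_right C₁ 0)
    calc ‖D x t‖ ≤ ‖ω (a + t • (x - a))‖ + ‖t • (ω' (a + t • (x - a))).flip (x - a)‖ :=
          norm_add_le _ _
      _ ≤ M₂ + M₁ * R := by
          refine add_le_add h1 ?_
          calc ‖t • (ω' (a + t • (x - a))).flip (x - a)‖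
              ≤ ‖t‖ * ‖(ω' (a + t • (x - a))).flip (x - a)‖ := by
                exact norm_smul_le (α := ℝ) (β := ((ℝ × ℝ) →L[ℝ] ℝ)) _ _
            _ ≤ 1 * (M₁ * R) := by
                rw [Real.norm_eq_abs]
                apply mul_le_mul ht' h4 (norm_nonneg _) zero_le_one
            _ = M₁ * R := one_mul _
  -- differentiation under the integral sign
  have main := intervalIntegral.hasFDerivAt_integral_of_dominated_of_fderiv_le
    (F := fun x t => ω (a + t • (x - a)) (x - a)) (F' := D) (x₀ := x₀)
    (bound := fun _ => M₂ + M₁ * R) (μ := volume) (a := (0:ℝ)) (b := 1) (ball_mem_nhds x₀ εpos)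
    ?_ ?_ ?_ ?_ ?_ ?_
  · -- identify the integral of D with ω x₀ via FTC
    have hkey : ∀ t ∈ Set.uIcc (0:ℝ) 1,
        HasDerivAt (fun s : ℝ => s • ω (a + s • (x₀ - a))) (D x₀ t) t := by
      intro t ht
      rw [Set.uIcc_of_le zero_le_one] at ht
      have hcU : a + t • (x₀ - a) ∈ U := hmem t ht x₀ hx₀ball
      have h1 : HasDerivAt (fun s : ℝ => a + s • (x₀ - a)) (x₀ - a) t := by
        simpa using ((hasDerivAt_id t).smul_const (x₀ - a)).const_add a
      have hωd : HasFDerivAt ω (ω' (a + t • (x₀ - a))) (a + t • (x₀ - a)) :=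
        hasFDerivAt_omg hU hF₁ hF₂ hcU
      have h2 : HasDerivAt (fun s : ℝ => ω (a + s • (x₀ - a)))
          (ω' (a + t • (x₀ - a)) (x₀ - a)) t := by have := hωd.comp_hasDerivAt t h1; exact this
      have h3 := (hasDerivAt_id t).smul h2
      refine h3.congr_deriv (ContinuousLinearMap.ext fun v => ?_)
      have hsymm := omg'_symm hU hcurl hcU
      simp only [hD, ContinuousLinearMap.add_apply, ContinuousLinearMap.smul_apply,
        ContinuousLinearMap.flip_apply, smul_eq_mul, ContinuousLinearMap.coe_smul',
        Pi.smul_apply, id_eq]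
      rw [hsymm (x₀ - a) v]
      ring
    have hint : IntervalIntegrable (D x₀) volume 0 1 := by
      apply ContinuousOn.intervalIntegrable
      rw [Set.uIcc_of_le zero_le_one]
      exact hDcont x₀ hx₀ball
    have hInteq : (∫ t in (0:ℝ)..1, D x₀ t) = ω x₀ := by
      rw [intervalIntegral.integral_eq_sub_of_hasDerivAt hkey hint]
      simp
    rw [hInteq] at main
    exact main
  · -- measurability of the integrand near x₀
    filter_upwards [ball_mem_nhds x₀ εpos] with x hx
    exact ((hGcont x (ball_subset_closedBall hx)).mono hIsub).aestronglyMeasurable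
      measurableSet_uIoc
  · -- integrability at x₀
    apply ContinuousOn.intervalIntegrable
    rw [Set.uIcc_of_le zero_le_one]
    exact hGcont x₀ hx₀ball
  · -- measurability of D x₀
    exact ((hDcont x₀ hx₀ball).mono hIsub).aestronglyMeasurable measurableSet_uIoc
  · exact Filter.Eventually.of_forall hbound
  · exact intervalIntegrable_const
  · exact Filter.Eventually.of_forall hdiff
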